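/- Let B : ℝ[t] × ℝ[t] → ℝ be a symmetric bilinear form and h a monic polynomial of degree N ≥ 1 such that B(h·f, g) = B(f, h·g) for all polynomials f, g. Suppose B(h·f, g) = ∫ f g dμ₀ for a fixed measure μ₀ (i.e., B agrees with a prescribed bilinear form after multiplication by h). Then B is completely determined by μ₀ together with the N×N symmetric matrix Ŝ with entries Ŝ_{m,m'} = B(t^m, t^{m'}), 0 ≤ m, m' ≤ N−1. -/

import Mathlib

open Polynomial MeasureTheory

theorem geronimus_determined_by_measure_and_S (N : ℕ) (hN : 1 ≤ N)
    (h : Polynomial ℝ) (hmonic : h.Monic) (hdeg : h.natDegree = N)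
    (μ₀ : Measure ℝ) (hint : ∀ f : Polynomial ℝ, Integrable (fun t => f.eval t) μ₀)
    (B₁ B₂ : Polynomial ℝ →ₗ[ℝ] Polynomial ℝ →ₗ[ℝ] ℝ)
    (hsym₁ : ∀ f g, B₁ f g = B₁ g f) (hsym₂ : ∀ f g, B₂ f g = B₂ g f)
    (hB₁ : ∀ f g, B₁ (h * f) g = ∫ t, f.eval t * g.eval t ∂μ₀)
    (hB₂ : ∀ f g, B₂ (h * f) g = ∫ t, f.eval t * g.eval t ∂μ₀)
    (hS : ∀ m m' : Fin N, B₁ (X ^ (m : ℕ)) (X ^ (m' : ℕ)) = B₂ (X ^ (m : ℕ)) (X ^ (m' : ℕ))) :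
    B₁ = B₂ := by
  set D := B₁ - B₂ with hDdef
  have hDapp : ∀ f g, D f g = B₁ f g - B₂ f g := by intro f g; simp [hDdef]
  have hDh : ∀ f g, D (h * f) g = 0 := by
    intro f g; rw [hDapp, hB₁, hB₂, sub_self]
  have hDsym : ∀ f g, D f g = D g f := by
    intro f g; rw [hDapp, hDapp, hsym₁, hsym₂]
  have hDmon : ∀ i j : ℕ, i < N → j < N → D (X ^ i) (X ^ j) = 0 := by
    intro i j hi hj
    rw [hDapp, hS ⟨i, hi⟩ ⟨j, hj⟩, sub_self]
  have hD0 : ∀ r r' : Polynomial ℝ, r.natDegree < N → r'.natDegree < N → D r r' = 0 := by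
    intro r r' hr hr'
    rw [r.as_sum_range' N hr, r'.as_sum_range' N hr']
    simp only [← smul_X_eq_monomial, map_sum, LinearMap.map_smul, LinearMap.sum_apply,
      LinearMap.smul_apply, smul_eq_mul]
    apply Finset.sum_eq_zero
    intro i hi
    apply Finset.sum_eq_zero
    intro j hj
    rw [hDmon j i (Finset.mem_range.mp hj) (Finset.mem_range.mp hi)]
    ring
  have h1 : h ≠ 1 := by
    intro he; rw [he] at hdeg; simp at hdeg; omega
  have key : ∀ f g, D f g = 0 := by
    intro f g
    have hf : f = h * (f /ₘ h) + f %ₘ h := by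
      rw [add_comm]; exact (modByMonic_add_div f h).symm
    have hg : g = h * (g /ₘ h) + g %ₘ h := by
      rw [add_comm]; exact (modByMonic_add_div g h).symm
    rw [hf, map_add, LinearMap.add_apply, hDh, zero_add]
    rw [hDsym, hg, map_add, LinearMap.add_apply, hDh, zero_add]
    exact hD0 _ _ (hdeg ▸ natDegree_modByMonic_lt g hmonic h1)
      (hdeg ▸ natDegree_modByMonic_lt f hmonic h1)
  refine LinearMap.ext fun f => LinearMap.ext fun g => ?_
  have := key f g
  rw [hDapp] at this
  linarith
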